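/- Under the same setup as the two-sided case, if instead the noise variables Z_r are i.i.d. from the one-sided density g(z) = h(z)/∫_{w≥0} h(w) dw for z ≥ 0 and g(z)=0 for z < 0 (where h is two-sided, symmetric and decreasing on [0,∞)), then the smooth private selection mechanism satisfies ((k + ((m−1)/2)·l)·ε)-differential privacy. -/

import Mathlib

open MeasureTheory

/-- The event (over the noise vector `z`) that the smooth private selection with
scores `u x ·` and noise scale `c` outputs candidate `r` (ties broken by
returning the smallest index). -/
def selEvent {m : ℕ} (v : Fin m → ℝ) (c : ℝ) (r : Fin m) : Set (Fin m → ℝ) :=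
  {z | (∀ s, s < r → v s + c * z s < v r + c * z r) ∧
       (∀ s, r < s → v s + c * z s ≤ v r + c * z r)}

set_option maxHeartbeats 1000000

open Set in
lemma affine_image_eq_preimage (a b : ℝ) (ha : a ≠ 0) (T : Set ℝ) :
    (fun z => a * z + b) '' T = (fun z => (z - b) / a) ⁻¹' T := by
  refine congrFun (Set.image_eq_preimage_of_inverse ?_ ?_) T
  · intro z; field_simp; ring
  · intro z; field_simp; ring

lemma measurable_affine_inv (a b : ℝ) : Measurable fun z : ℝ => (z - b) / a :=
  (measurable_id.sub_const b).div_const a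

lemma measurableSet_affine_image {a b : ℝ} (ha : a ≠ 0) {T : Set ℝ} (hT : MeasurableSet T) :
    MeasurableSet ((fun z => a * z + b) '' T) := by
  rw [affine_image_eq_preimage a b ha]
  exact measurable_affine_inv a b hT

open scoped ENNReal in
lemma my_pi_mono {ι : Type*} [Fintype ι] {α : ι → Type*} [∀ i, MeasurableSpace (α i)]
    (μ κ : ∀ i, Measure (α i)) (hle : ∀ i, μ i ≤ κ i) : Measure.pi μ ≤ Measure.pi κ := by
  refine Measure.le_iff.mpr fun A hA => ?_
  rw [Measure.pi, Measure.pi, toMeasure_apply _ _ hA, toMeasure_apply _ _ hA]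
  refine (OuterMeasure.le_boundedBy.mpr fun t => ?_) A
  refine (OuterMeasure.boundedBy_le t).trans ?_
  exact Finset.prod_le_prod' fun i _ => Measure.le_iff'.mp (hle i) _

open scoped ENNReal in
lemma my_pi_smul {ι : Type*} [Fintype ι] {α : ι → Type*} [∀ i, MeasurableSpace (α i)]
    (c : ι → ℝ≥0∞) (hc : ∀ i, c i ≠ ⊤) (μ : ∀ i, Measure (α i)) [∀ i, IsFiniteMeasure (μ i)] :
    Measure.pi (fun i => c i • μ i) = (∏ i, c i) • Measure.pi μ := by
  haveI : ∀ i, IsFiniteMeasure (c i • μ i) := fun i => ⟨by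
    rw [Measure.smul_apply, smul_eq_mul]
    exact ENNReal.mul_lt_top (hc i).lt_top (measure_lt_top _ _)⟩
  haveI : ∀ i, SigmaFinite (c i • μ i) := fun i => inferInstance
  refine Measure.pi_eq (μ := fun i => c i • μ i) fun s hs => ?_
  rw [Measure.smul_apply, Measure.pi_pi, smul_eq_mul, ← Finset.prod_mul_distrib]
  simp [Measure.smul_apply, smul_eq_mul]

open scoped ENNReal in
lemma core_pi {m : ℕ} (ν : Measure ℝ) [IsProbabilityMeasure ν] (a b : Fin m → ℝ)
    (ha : ∀ s, a s ≠ 0) (C : Fin m → ℝ≥0∞) (hCfin : ∀ s, C s ≠ ⊤)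
    (hC : ∀ s T, MeasurableSet T → ν T ≤ C s * ν ((fun z => a s * z + b s) '' T))
    (A : Set (Fin m → ℝ)) (hA : MeasurableSet A) :
    (Measure.pi fun _ : Fin m => ν) A ≤
      (∏ s, C s) * (Measure.pi fun _ : Fin m => ν) ((fun z s => a s * z s + b s) '' A) := by
  set ψ : Fin m → ℝ → ℝ := fun s z => (z - b s) / a s with hψ
  have hψm : ∀ s, Measurable (ψ s) := fun s => measurable_affine_inv _ _
  have h1 : ∀ s, ν ≤ C s • ν.map (ψ s) := by
    intro s
    refine Measure.le_iff.mpr fun T hT => ?_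
    rw [Measure.smul_apply, smul_eq_mul, Measure.map_apply (hψm s) hT,
      ← affine_image_eq_preimage _ _ (ha s)]
    exact hC s T hT
  haveI : ∀ s : Fin m, IsProbabilityMeasure (ν.map (ψ s)) :=
    fun s => Measure.isProbabilityMeasure_map (hψm s).aemeasurable
  have h2 := my_pi_mono (fun _ : Fin m => ν) (fun s => C s • ν.map (ψ s)) h1
  have h3 : Measure.pi (fun s : Fin m => C s • ν.map (ψ s)) =
      (∏ s, C s) • Measure.pi (fun s : Fin m => ν.map (ψ s)) :=
    my_pi_smul C hCfin _
  have h4 : Measure.pi (fun s : Fin m => ν.map (ψ s)) =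
      (Measure.pi fun _ : Fin m => ν).map (fun z s => ψ s (z s)) :=
    (measurePreserving_pi _ _ (fun s => ⟨hψm s, rfl⟩)).map_eq.symm
  have h5 : (fun z s => ψ s (z s)) ⁻¹' A = (fun z s => a s * z s + b s) '' A := by
    refine (congrFun (Set.image_eq_preimage_of_inverse ?_ ?_) A).symm
    · intro z; funext s; simp only [hψ]; field_simp [ha s]; ring
    · intro z; funext s; simp only [hψ]; field_simp [ha s]; ring
  calc (Measure.pi fun _ : Fin m => ν) A
      ≤ Measure.pi (fun s : Fin m => C s • ν.map (ψ s)) A := Measure.le_iff'.mp h2 A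
    _ = (∏ s, C s) * (Measure.pi fun _ : Fin m => ν).map (fun z s => ψ s (z s)) A := by
        rw [h3, h4, Measure.smul_apply, smul_eq_mul]
    _ = (∏ s, C s) * (Measure.pi fun _ : Fin m => ν) ((fun z s => a s * z s + b s) '' A) := by
        have hΨ : Measurable fun (z : Fin m → ℝ) (s : Fin m) => ψ s (z s) :=
          measurable_pi_iff.mpr fun s => (hψm s).comp (measurable_pi_apply s)
        rw [Measure.map_apply hΨ hA, h5]

section NuFacts
open Set
open scoped ENNReal

variable (h : ℝ → ℝ) (Z : ℝ) (ν₀ ν : Measure ℝ)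
  (hν₀ : ν₀ = volume.withDensity fun z => ENNReal.ofReal (h z))
  (hν : ν = volume.withDensity fun z => ENNReal.ofReal (if 0 ≤ z then h z / Z else 0))
  (hZ : 0 < Z)

include hν₀ hν hZ in
lemma nu_eq_on_Ici {U : Set ℝ} (hU : MeasurableSet U) (hU' : U ⊆ Ici 0) :
    ν U = (ENNReal.ofReal Z)⁻¹ * ν₀ U := by
  rw [hν, hν₀, withDensity_apply _ hU, withDensity_apply _ hU]
  rw [← lintegral_const_mul' _ _
    (by simp [ENNReal.inv_ne_top, ENNReal.ofReal_pos.2 hZ, (ENNReal.ofReal_pos.2 hZ).ne'])]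
  refine setLIntegral_congr_fun hU (fun z hz => ?_)
  have h0 : (0:ℝ) ≤ z := hU' hz
  rw [if_pos h0, ENNReal.ofReal_div_of_pos hZ, ENNReal.div_eq_inv_mul]

include hν in
lemma nu_Iio_zero : ν (Iio 0) = 0 := by
  rw [hν, withDensity_apply _ measurableSet_Iio]
  rw [setLIntegral_congr_fun measurableSet_Iio (fun z (hz : z < 0) => by
    rw [if_neg (not_le.mpr hz), ENNReal.ofReal_zero])]
  simp

include hν₀ hν hZ in
lemma nu_transfer (a b : ℝ) (ha : 0 < a) (hb : 0 ≤ b) (C : ℝ≥0∞)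
    (h₀ : ∀ T : Set ℝ, MeasurableSet T → ν₀ T ≤ C * ν₀ ((fun z => a * z + b) '' T)) :
    ∀ T : Set ℝ, MeasurableSet T → ν T ≤ C * ν ((fun z => a * z + b) '' T) := by
  intro T hT
  have hsub : ν T ≤ ν (T ∩ Ici 0) := by
    have hTs : T ⊆ (T ∩ Ici 0) ∪ Iio 0 := by
      intro z hz
      rcases le_or_gt 0 z with h0 | h0
      · exact Or.inl ⟨hz, h0⟩
      · exact Or.inr h0
    calc ν T ≤ ν ((T ∩ Ici 0) ∪ Iio 0) := measure_mono hTs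
      _ ≤ ν (T ∩ Ici 0) + ν (Iio 0) := measure_union_le _ _
      _ = ν (T ∩ Ici 0) := by rw [nu_Iio_zero h Z ν hν, add_zero]
  have hTm : MeasurableSet (T ∩ Ici 0) := hT.inter measurableSet_Ici
  have himm : MeasurableSet ((fun z => a * z + b) '' (T ∩ Ici 0)) :=
    measurableSet_affine_image ha.ne' hTm
  have himsub : (fun z => a * z + b) '' (T ∩ Ici 0) ⊆ Ici 0 := by
    rintro _ ⟨z, ⟨_, hz0⟩, rfl⟩
    have : (0:ℝ) ≤ a * z := mul_nonneg ha.le hz0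
    simp only [mem_Ici]; linarith
  calc ν T ≤ ν (T ∩ Ici 0) := hsub
    _ = (ENNReal.ofReal Z)⁻¹ * ν₀ (T ∩ Ici 0) :=
        nu_eq_on_Ici h Z ν₀ ν hν₀ hν hZ hTm inter_subset_right
    _ ≤ (ENNReal.ofReal Z)⁻¹ * (C * ν₀ ((fun z => a * z + b) '' (T ∩ Ici 0))) :=
        mul_le_mul_right (h₀ _ hTm) _
    _ = C * ((ENNReal.ofReal Z)⁻¹ * ν₀ ((fun z => a * z + b) '' (T ∩ Ici 0))) := by ring
    _ = C * ν ((fun z => a * z + b) '' (T ∩ Ici 0)) := by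
        rw [nu_eq_on_Ici h Z ν₀ ν hν₀ hν hZ himm himsub]
    _ ≤ C * ν ((fun z => a * z + b) '' T) :=
        mul_le_mul_right (measure_mono (image_mono inter_subset_left)) _

end NuFacts


lemma measurableSet_selEvent {m : ℕ} (v : Fin m → ℝ) (c : ℝ) (r : Fin m) :
    MeasurableSet (selEvent v c r) := by
  have hf : ∀ s : Fin m, Measurable fun z : Fin m → ℝ => v s + c * z s := fun s =>
    (measurable_const.mul (measurable_pi_apply s)).const_add _
  have heq : selEvent v c r =
      (⋂ s, ⋂ (_ : s < r), {z : Fin m → ℝ | v s + c * z s < v r + c * z r}) ∩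
      (⋂ s, ⋂ (_ : r < s), {z : Fin m → ℝ | v s + c * z s ≤ v r + c * z r}) := by
    ext z
    simp only [selEvent, Set.mem_setOf_eq, Set.mem_inter_iff, Set.mem_iInter]
  rw [heq]
  exact ((MeasurableSet.iInter fun s => MeasurableSet.iInter fun _ =>
      measurableSet_lt (hf s) (hf r))).inter
    ((MeasurableSet.iInter fun s => MeasurableSet.iInter fun _ =>
      measurableSet_le (hf s) (hf r)))
set_option maxHeartbeats 1000000 in

/-- Theorem 3 (one-sided noise): with the same setup as the two-sided case, but
with the noise variables `Z_r` i.i.d. from the one-sided density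
`g(z) = h(z)/∫_{w ≥ 0} h(w) dw` for `z ≥ 0` and `g(z) = 0` for `z < 0`
(where the two-sided density `h` satisfies `h(z) > h(z') > 0` for `0 ≤ z < z'`,
and the measure with density `h` satisfies the sliding property with parameter
`α' = α(kε)` at level `kε` and the dilation property with parameter `β' = β(lε)`
at level `lε`), the smooth private selection satisfies
`((k + ((m-1)/2)·l)·ε)`-differential privacy. -/
theorem stmt13 {X : Type*} [Fintype X] [DecidableEq X] {n m : ℕ}
    (u S : (Fin n → X) → Fin m → ℝ)
    (h : ℝ → ℝ)
    (hdec : ∀ z z' : ℝ, 0 ≤ z → z < z' → h z' < h z ∧ 0 < h z')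
    (ν₀ : Measure ℝ)
    (hν₀ : ν₀ = volume.withDensity fun z => ENNReal.ofReal (h z))
    (ν : Measure ℝ) [IsProbabilityMeasure ν]
    (hν : ν = volume.withDensity fun z =>
      ENNReal.ofReal (if 0 ≤ z then h z / ∫ w in Set.Ici (0 : ℝ), h w else 0))
    (ε k l α' β' : ℝ) (hε : 0 < ε) (hk : 0 < k) (hl : 0 < l) (hα : 0 < α')
    (hsliding : ∀ Δ : ℝ, |Δ| ≤ α' → ∀ T : Set ℝ, MeasurableSet T →
      ν₀ T ≤ ENNReal.ofReal (Real.exp (k * ε / 2)) * ν₀ ((· + Δ) '' T))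
    (hdilation : ∀ lam : ℝ, |lam| ≤ β' → ∀ T : Set ℝ, MeasurableSet T →
      ν₀ T ≤ ENNReal.ofReal (Real.exp (l * ε / 2)) * ν₀ ((Real.exp lam * ·) '' T))
    (hSpos : ∀ x r, 0 < S x r)
    -- `S` is an upper bound on the local sensitivity of the score `u`:
    (hub : ∀ (r : Fin m) x y, hammingDist x y = 1 → |u x r - u y r| ≤ S x r)
    -- `S` is `β'`-smooth:
    (hsmooth : ∀ (r : Fin m) x y, hammingDist x y = 1 → S x r ≤ Real.exp β' * S y r) :
    ∀ x y, hammingDist x y = 1 → ∀ r : Fin m,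
      (Measure.pi fun _ : Fin m => ν) (selEvent (u x) ((⨆ t, S x t) / α') r) ≤
        ENNReal.ofReal (Real.exp ((k + ((m : ℝ) - 1) / 2 * l) * ε)) *
          (Measure.pi fun _ : Fin m => ν) (selEvent (u y) ((⨆ t, S y t) / α') r) := by
  intro x y hxy r
  haveI : Nonempty (Fin m) := ⟨r⟩
  have hm1 : 0 < m := r.pos
  -- basic facts about the sups
  set Mx := ⨆ t, S x t with hMxdef
  set My := ⨆ t, S y t with hMydef
  have hbddx : BddAbove (Set.range (S x)) := (Set.finite_range _).bddAbove
  have hbddy : BddAbove (Set.range (S y)) := (Set.finite_range _).bddAbove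
  have hSx : ∀ s, S x s ≤ Mx := fun s => le_ciSup hbddx s
  have hSy : ∀ s, S y s ≤ My := fun s => le_ciSup hbddy s
  have hMxpos : 0 < Mx := lt_of_lt_of_le (hSpos x r) (hSx r)
  have hMypos : 0 < My := lt_of_lt_of_le (hSpos y r) (hSy r)
  have hyx : hammingDist y x = 1 := by rwa [hammingDist_comm]
  have hMxy : Mx ≤ Real.exp β' * My :=
    ciSup_le fun t => (hsmooth t x y hxy).trans
      (mul_le_mul_of_nonneg_left (hSy t) (Real.exp_pos β').le)
  have hMyx : My ≤ Real.exp β' * Mx :=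
    ciSup_le fun t => (hsmooth t y x hyx).trans
      (mul_le_mul_of_nonneg_left (hSx t) (Real.exp_pos β').le)
  -- facts about the normalizing constant
  set Z := ∫ w in Set.Ici (0:ℝ), h w with hZdef
  have hpos : ∀ w : ℝ, 0 ≤ w → 0 < h w := fun w hw =>
    (hdec w (w+1) hw (lt_add_one w)).2.trans (hdec w (w+1) hw (lt_add_one w)).1
  have hZnn : 0 ≤ Z := setIntegral_nonneg measurableSet_Ici fun w hw => (hpos w hw).le
  have hZpos : 0 < Z := by
    rcases hZnn.lt_or_eq with hp | hp
    · exact hp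
    · exfalso
      have h0 : ν Set.univ = 1 := measure_univ
      rw [hν, ← hp] at h0
      simp [div_zero] at h0
  have hνIio : ν (Set.Iio 0) = 0 := nu_Iio_zero h Z ν hν
  -- the positive orthant
  set Q : Set (Fin m → ℝ) := ⋂ s : Fin m, (fun z : Fin m → ℝ => z s) ⁻¹' Set.Ici 0 with hQdef
  have hQmeas : MeasurableSet Q :=
    MeasurableSet.iInter fun s => (measurable_pi_apply s) measurableSet_Ici
  have hQmem : ∀ z : Fin m → ℝ, z ∈ Q ↔ ∀ s, 0 ≤ z s := by
    intro z; simp [hQdef, Set.mem_iInter]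
  have hQc : (Measure.pi fun _ : Fin m => ν) Qᶜ = 0 := by
    have : Qᶜ = ⋃ s : Fin m, (fun z : Fin m → ℝ => z s) ⁻¹' Set.Iio 0 := by
      ext z
      simp [hQdef, Set.mem_iInter, not_forall, not_le]
    rw [this]
    exact measure_iUnion_null fun s => Measure.pi_eval_preimage_null _ hνIio
  have hstep1 : ∀ A : Set (Fin m → ℝ),
      (Measure.pi fun _ : Fin m => ν) A ≤ (Measure.pi fun _ : Fin m => ν) (A ∩ Q) := by
    intro A
    have hsub : A ⊆ (A ∩ Q) ∪ Qᶜ := by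
      intro z hz
      by_cases hq : z ∈ Q
      · exact Or.inl ⟨hz, hq⟩
      · exact Or.inr hq
    calc (Measure.pi fun _ : Fin m => ν) A
        ≤ (Measure.pi fun _ : Fin m => ν) ((A ∩ Q) ∪ Qᶜ) := measure_mono hsub
      _ ≤ (Measure.pi fun _ : Fin m => ν) (A ∩ Q) +
            (Measure.pi fun _ : Fin m => ν) Qᶜ := measure_union_le _ _
      _ = (Measure.pi fun _ : Fin m => ν) (A ∩ Q) := by rw [hQc, add_zero]
  -- dispose of the case m = 1
  by_cases hm : m = 1
  · subst hm
    have huniv : ∀ (v : Fin 1 → ℝ) (c : ℝ), selEvent v c r = Set.univ := by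
      intro v c
      refine Set.eq_univ_of_forall fun z => ?_
      refine ⟨fun s hs => absurd hs ?_, fun s hs => absurd hs ?_⟩ <;>
        · rw [Subsingleton.elim s r]; exact lt_irrefl r
    rw [huniv (u x), huniv (u y)]
    have hpi1 : (Measure.pi fun _ : Fin 1 => ν) Set.univ = 1 := by
      rw [← Set.pi_univ Set.univ, Measure.pi_pi]
      simp
    rw [hpi1]
    refine le_mul_of_one_le_left zero_le ?_
    rw [show ((1:ℕ):ℝ) - 1 = 0 by norm_num]
    refine ENNReal.one_le_ofReal.mpr (Real.one_le_exp ?_)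
    positivity
  have hm2 : 2 ≤ m := by omega
  -- the dilation parameter
  set lam := Real.log (Mx / My) with hlamdef
  have hexplam : Real.exp lam = Mx / My := Real.exp_log (div_pos hMxpos hMypos)
  have hlam : |lam| ≤ β' := by
    rw [abs_le]
    constructor
    · have h3 : Real.log (My / Mx) ≤ β' :=
        (Real.log_le_iff_le_exp (div_pos hMypos hMxpos)).mpr ((div_le_iff₀ hMxpos).mpr hMyx)
      have h4 : lam = - Real.log (My / Mx) := by
        rw [hlamdef, Real.log_div hMxpos.ne' hMypos.ne', Real.log_div hMypos.ne' hMxpos.ne']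
        ring
      rw [h4]
      linarith
    · exact (Real.log_le_iff_le_exp (div_pos hMxpos hMypos)).mpr ((div_le_iff₀ hMypos).mpr hMxy)
  
  -- ν₀-level shift by Δ ∈ [0, 2α']
  have shift0 : ∀ Δ : ℝ, 0 ≤ Δ → Δ ≤ 2*α' → ∀ T : Set ℝ, MeasurableSet T →
      ν₀ T ≤ ENNReal.ofReal (Real.exp (k*ε)) * ν₀ ((fun z => 1*z + Δ) '' T) := by
    intro Δ h0 h2 T hT
    have habs : |Δ/2| ≤ α' := by rw [abs_of_nonneg (by linarith)]; linarith
    have e1 := hsliding (Δ/2) habs T hT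
    have himeq : ((· + Δ/2) '' T) = (fun z => 1*z + Δ/2) '' T := by simp only [one_mul]
    have him : MeasurableSet ((· + Δ/2) '' T) := by
      rw [himeq]; exact measurableSet_affine_image one_ne_zero hT
    have e2 := hsliding (Δ/2) habs _ him
    have him2eq : ((· + Δ/2) '' ((· + Δ/2) '' T)) = (fun z => 1*z + Δ) '' T := by
      have hff : (fun x : ℝ => x + Δ/2 + Δ/2) = fun z : ℝ => 1*z + Δ := by funext zz; ring
      rw [Set.image_image, hff]
    calc ν₀ T ≤ ENNReal.ofReal (Real.exp (k*ε/2)) * ν₀ ((· + Δ/2) '' T) := e1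
      _ ≤ ENNReal.ofReal (Real.exp (k*ε/2)) *
          (ENNReal.ofReal (Real.exp (k*ε/2)) * ν₀ ((· + Δ/2) '' ((· + Δ/2) '' T))) :=
            mul_le_mul_right e2 _
      _ = ENNReal.ofReal (Real.exp (k*ε)) * ν₀ ((fun z => 1*z + Δ) '' T) := by
            have hkk : k*ε/2 + k*ε/2 = k*ε := by ring
            rw [him2eq, ← mul_assoc, ← ENNReal.ofReal_mul (Real.exp_nonneg _), ← Real.exp_add,
              hkk]
  -- ν-level per-coordinate inequalities
  have key_shift : ∀ Δ : ℝ, 0 ≤ Δ → Δ ≤ 2*α' → ∀ T : Set ℝ, MeasurableSet T →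
      ν T ≤ ENNReal.ofReal (Real.exp (k*ε)) * ν ((fun z => 1*z + Δ) '' T) :=
    fun Δ h0 h2 => nu_transfer h Z ν₀ ν hν₀ hν hZpos 1 Δ one_pos h0 _ (shift0 Δ h0 h2)
  have dil0 : ∀ T : Set ℝ, MeasurableSet T →
      ν₀ T ≤ ENNReal.ofReal (Real.exp (l*ε/2)) * ν₀ ((fun z => Real.exp lam * z + 0) '' T) := by
    intro T hT
    have e := hdilation lam hlam T hT
    have : ((Real.exp lam * ·) '' T) = (fun z => Real.exp lam * z + 0) '' T := by
      simp only [add_zero]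
    rwa [this] at e
  have key_dil : ∀ T : Set ℝ, MeasurableSet T →
      ν T ≤ ENNReal.ofReal (Real.exp (l*ε/2)) * ν ((fun z => Real.exp lam * z + 0) '' T) :=
    nu_transfer h Z ν₀ ν hν₀ hν hZpos (Real.exp lam) 0 (Real.exp_pos _) le_rfl _ dil0
  have comp0 : ∀ T : Set ℝ, MeasurableSet T →
      ν₀ T ≤ ENNReal.ofReal (Real.exp (k*ε + l*ε/2)) *
        ν₀ ((fun z => Real.exp lam * z + Real.exp lam * (2*α')) '' T) := by
    intro T hT
    have e1 := shift0 (2*α') (by linarith) le_rfl T hT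
    have him : MeasurableSet ((fun z => 1*z + 2*α') '' T) :=
      measurableSet_affine_image one_ne_zero hT
    have e2 := hdilation lam hlam _ him
    have him2eq : ((Real.exp lam * ·) '' ((fun z => 1*z + 2*α') '' T)) =
        (fun z => Real.exp lam * z + Real.exp lam * (2*α')) '' T := by
      have hff : (fun x : ℝ => Real.exp lam * (1*x + 2*α')) =
          fun z : ℝ => Real.exp lam * z + Real.exp lam * (2*α') := by funext zz; ring
      rw [Set.image_image, hff]
    calc ν₀ T ≤ ENNReal.ofReal (Real.exp (k*ε)) * ν₀ ((fun z => 1*z + 2*α') '' T) := e1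
      _ ≤ ENNReal.ofReal (Real.exp (k*ε)) * (ENNReal.ofReal (Real.exp (l*ε/2)) *
          ν₀ ((Real.exp lam * ·) '' ((fun z => 1*z + 2*α') '' T))) := mul_le_mul_right e2 _
      _ = ENNReal.ofReal (Real.exp (k*ε + l*ε/2)) *
          ν₀ ((fun z => Real.exp lam * z + Real.exp lam * (2*α')) '' T) := by
            rw [him2eq, ← mul_assoc, ← ENNReal.ofReal_mul (Real.exp_nonneg _), ← Real.exp_add]
  have key_comp : ∀ T : Set ℝ, MeasurableSet T →
      ν T ≤ ENNReal.ofReal (Real.exp (k*ε + l*ε/2)) *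
        ν ((fun z => Real.exp lam * z + Real.exp lam * (2*α')) '' T) :=
    nu_transfer h Z ν₀ ν hν₀ hν hZpos (Real.exp lam) (Real.exp lam * (2*α'))
      (Real.exp_pos _) (by positivity) _ comp0
  have key_id : ∀ T : Set ℝ, MeasurableSet T →
      ν T ≤ 1 * ν ((fun z => 1*z + 0) '' T) := by
    intro T hT
    simp only [one_mul, add_zero, Set.image_id']
    exact le_rfl
  -- the events
  have hAx : MeasurableSet (selEvent (u x) (Mx/α') r ∩ Q) :=
    (measurableSet_selEvent _ _ _).inter hQmeas
  -- bounds relating scores of x and y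
  have hud : ∀ s, |u x s - u y s| ≤ Mx := fun s => (hub s x y hxy).trans (hSx s)
  -- abbreviation for the target coefficient
  have htarget : (k + ((m:ℝ)-1)/2*l)*ε = k*ε + ((m:ℝ)-1)*(l*ε/2) := by ring
  -- product over Fin m of an ite
  have hprod : ∀ P R : ENNReal, (∏ s : Fin m, if s = r then P else R) = P * R^(m-1) := by
    intro P R
    rw [← Finset.mul_prod_erase Finset.univ _ (Finset.mem_univ r)]
    rw [if_pos rfl]
    congr 1
    rw [Finset.prod_congr rfl (fun s hs => if_neg (Finset.ne_of_mem_erase hs)),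
      Finset.prod_const, Finset.card_erase_of_mem (Finset.mem_univ r), Finset.card_univ,
      Fintype.card_fin]
  by_cases hcase : Mx ≤ My
  · -- case My ≥ Mx : shift the winner, contract the losers
    set a : Fin m → ℝ := fun s => if s = r then 1 else Real.exp lam with hadef
    set b : Fin m → ℝ := fun s => if s = r then 2*α'*(Mx/My) else 0 with hbdef
    set C : Fin m → ENNReal := fun s => if s = r then ENNReal.ofReal (Real.exp (k*ε))
      else ENNReal.ofReal (Real.exp (l*ε/2)) with hCdef
    have ha : ∀ s, a s ≠ 0 := by
      intro s
      by_cases hs : s = r <;> simp [hadef, hs, (Real.exp_pos lam).ne']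
    have hCfin : ∀ s, C s ≠ ⊤ := by
      intro s
      by_cases hs : s = r <;> simp [hCdef, hs]
    have hC : ∀ s T, MeasurableSet T → ν T ≤ C s * ν ((fun z => a s * z + b s) '' T) := by
      intro s T hT
      by_cases hs : s = r
      · simp only [hadef, hbdef, hCdef, if_pos hs]
        refine key_shift (2*α'*(Mx/My)) (by positivity) ?_ T hT
        have hdiv : Mx/My ≤ 1 := (div_le_one hMypos).mpr hcase
        nlinarith
      · simp only [hadef, hbdef, hCdef, if_neg hs]
        exact key_dil T hT
    have hcore := core_pi ν a b ha C hCfin hC _ hAx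
    -- inclusion of the image event
    have hincl : (fun z s => a s * z s + b s) '' (selEvent (u x) (Mx/α') r ∩ Q) ⊆
        selEvent (u y) (My/α') r := by
      rintro w ⟨z, ⟨hzA, hzQ⟩, rfl⟩
      have hq : ∀ s, 0 ≤ z s := (hQmem z).mp hzQ
      have key1 : ∀ t : ℝ, (My/α') * (Real.exp lam * t + 0) = (Mx/α') * t := by
        intro t
        rw [hexplam]
        field_simp
        ring
      have key2 : (My/α') * (1 * z r + 2*α'*(Mx/My)) = (My/α') * z r + 2*Mx := by
        field_simp
      have key3 : (Mx/α') * z r ≤ (My/α') * z r := by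
        have : Mx/α' ≤ My/α' := by gcongr
        exact mul_le_mul_of_nonneg_right this (hq r)
      constructor
      · intro s hs
        have hsr : s ≠ r := ne_of_lt hs
        simp only [hadef, hbdef, if_neg hsr, if_pos rfl]
        rw [key1 (z s), key2]
        have h5 := hzA.1 s hs
        have h6 := abs_le.mp (hud s)
        have h7 := abs_le.mp (hud r)
        linarith
      · intro s hs
        have hsr : s ≠ r := ne_of_gt hs
        simp only [hadef, hbdef, if_neg hsr, if_pos rfl]
        rw [key1 (z s), key2]
        have h5 := hzA.2 s hs
        have h6 := abs_le.mp (hud s)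
        have h7 := abs_le.mp (hud r)
        linarith
    have hprodC : (∏ s, C s) = ENNReal.ofReal (Real.exp (k*ε + ((m:ℝ)-1)*(l*ε/2))) := by
      rw [hCdef, hprod, ← ENNReal.ofReal_pow (Real.exp_nonneg _), ← Real.exp_nat_mul,
        ← ENNReal.ofReal_mul (Real.exp_nonneg _), ← Real.exp_add]
      congr 2
      have : ((m - 1 : ℕ) : ℝ) = (m:ℝ) - 1 := by
        rw [Nat.cast_sub hm1]
        norm_num
      rw [this]
    calc (Measure.pi fun _ : Fin m => ν) (selEvent (u x) (Mx/α') r)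
        ≤ (Measure.pi fun _ : Fin m => ν) (selEvent (u x) (Mx/α') r ∩ Q) := hstep1 _
      _ ≤ (∏ s, C s) * (Measure.pi fun _ : Fin m => ν)
            ((fun z s => a s * z s + b s) '' (selEvent (u x) (Mx/α') r ∩ Q)) := hcore
      _ ≤ (∏ s, C s) * (Measure.pi fun _ : Fin m => ν) (selEvent (u y) (My/α') r) :=
            mul_le_mul_right (measure_mono hincl) _
      _ ≤ ENNReal.ofReal (Real.exp ((k + ((m:ℝ)-1)/2*l)*ε)) *
            (Measure.pi fun _ : Fin m => ν) (selEvent (u y) (My/α') r) := by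
            rw [hprodC, htarget]
  · -- case My < Mx : dilate-and-shift the winner, keep the losers
    push_neg at hcase
    set a : Fin m → ℝ := fun s => if s = r then Real.exp lam else 1 with hadef
    set b : Fin m → ℝ := fun s => if s = r then Real.exp lam * (2*α') else 0 with hbdef
    set C : Fin m → ENNReal := fun s => if s = r then ENNReal.ofReal (Real.exp (k*ε + l*ε/2))
      else 1 with hCdef
    have ha : ∀ s, a s ≠ 0 := by
      intro s
      by_cases hs : s = r <;> simp [hadef, hs, (Real.exp_pos lam).ne']
    have hCfin : ∀ s, C s ≠ ⊤ := by
      intro s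
      by_cases hs : s = r <;> simp [hCdef, hs]
    have hC : ∀ s T, MeasurableSet T → ν T ≤ C s * ν ((fun z => a s * z + b s) '' T) := by
      intro s T hT
      by_cases hs : s = r
      · simp only [hadef, hbdef, hCdef, if_pos hs]
        exact key_comp T hT
      · simp only [hadef, hbdef, hCdef, if_neg hs]
        exact key_id T hT
    have hcore := core_pi ν a b ha C hCfin hC _ hAx
    have hincl : (fun z s => a s * z s + b s) '' (selEvent (u x) (Mx/α') r ∩ Q) ⊆
        selEvent (u y) (My/α') r := by
      rintro w ⟨z, ⟨hzA, hzQ⟩, rfl⟩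
      have hq : ∀ s, 0 ≤ z s := (hQmem z).mp hzQ
      have key2 : (My/α') * (Real.exp lam * z r + Real.exp lam * (2*α')) =
          (Mx/α') * z r + 2*Mx := by
        rw [hexplam]
        field_simp
      have key3 : ∀ s, (My/α') * z s ≤ (Mx/α') * z s := by
        intro s
        have hdd : My/α' ≤ Mx/α' := by gcongr
        exact mul_le_mul_of_nonneg_right hdd (hq s)
      constructor
      · intro s hs
        have hsr : s ≠ r := ne_of_lt hs
        simp only [hadef, hbdef, if_neg hsr, if_pos rfl]
        rw [key2]
        have h5 := hzA.1 s hs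
        have h6 := abs_le.mp (hud s)
        have h7 := abs_le.mp (hud r)
        have h8 := key3 s
        rw [one_mul, add_zero]
        linarith
      · intro s hs
        have hsr : s ≠ r := ne_of_gt hs
        simp only [hadef, hbdef, if_neg hsr, if_pos rfl]
        rw [key2]
        have h5 := hzA.2 s hs
        have h6 := abs_le.mp (hud s)
        have h7 := abs_le.mp (hud r)
        have h8 := key3 s
        rw [one_mul, add_zero]
        linarith
    have hprodC : (∏ s, C s) = ENNReal.ofReal (Real.exp (k*ε + l*ε/2)) := by
      rw [hCdef, hprod, one_pow, mul_one]
    have hCle : (∏ s, C s) ≤ ENNReal.ofReal (Real.exp ((k + ((m:ℝ)-1)/2*l)*ε)) := by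
      rw [hprodC, htarget]
      refine ENNReal.ofReal_le_ofReal (Real.exp_le_exp.mpr ?_)
      have hm2' : (2:ℝ) ≤ (m:ℝ) := by exact_mod_cast hm2
      have h9 : l*ε/2 ≤ ((m:ℝ)-1)*(l*ε/2) :=
        le_mul_of_one_le_left (by positivity) (by linarith)
      linarith
    calc (Measure.pi fun _ : Fin m => ν) (selEvent (u x) (Mx/α') r)
        ≤ (Measure.pi fun _ : Fin m => ν) (selEvent (u x) (Mx/α') r ∩ Q) := hstep1 _
      _ ≤ (∏ s, C s) * (Measure.pi fun _ : Fin m => ν)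
            ((fun z s => a s * z s + b s) '' (selEvent (u x) (Mx/α') r ∩ Q)) := hcore
      _ ≤ (∏ s, C s) * (Measure.pi fun _ : Fin m => ν) (selEvent (u y) (My/α') r) :=
            mul_le_mul_right (measure_mono hincl) _
      _ ≤ ENNReal.ofReal (Real.exp ((k + ((m:ℝ)-1)/2*l)*ε)) *
            (Measure.pi fun _ : Fin m => ν) (selEvent (u y) (My/α') r) :=
            mul_le_mul_left hCle _
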